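/- Let γ₁, γ₂, γ₃ > 0, m ∈ ℕ, and set C_m² = (√(γ₂γ₃)/π)·γ₁^(m+1/2)/Γ(m+1/2). Then ∫_{ℝ³} (1/2)(γ₁²x₁² + γ₂²x₂² + γ₃²x₃²)·C_m²·x₁^(2m)·exp(−(γ₁x₁² + γ₂x₂² + γ₃x₃²)) dx = γ₁·m/2 + (γ₁+γ₂+γ₃)/4. (This is the potential-energy identity ∫ V_γ |ψ_m|² = γ₁|m|/2 + (γ₁+γ₂+γ₃)/4 for the anisotropic 3D vortex trial functions.) -/

import Mathlib

open MeasureTheory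
open Real Set

lemma integrable_pow_mul_exp_neg_mul_sq' {b : ℝ} (hb : 0 < b) (k : ℕ) :
    Integrable (fun x : ℝ => x ^ k * Real.exp (-b * x ^ 2)) := by
  have h := integrable_rpow_mul_exp_neg_mul_sq hb (s := (k : ℝ))
    (by have : (0:ℝ) ≤ k := Nat.cast_nonneg k; linarith)
  refine h.congr (Filter.Eventually.of_forall fun x => ?_)
  simp [Real.rpow_natCast]

lemma gauss_moment {b : ℝ} (hb : 0 < b) (n : ℕ) :
    ∫ x : ℝ, x ^ (2 * n) * Real.exp (-b * x ^ 2)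
      = Real.Gamma ((n : ℝ) + 1 / 2) / b ^ ((n : ℝ) + 1 / 2) := by
  have habs : ∫ x : ℝ, x ^ (2 * n) * Real.exp (-b * x ^ 2)
      = 2 * ∫ x in Ioi (0:ℝ), x ^ (2 * n) * Real.exp (-b * x ^ 2) := by
    rw [← integral_comp_abs (f := fun x => x ^ (2 * n) * Real.exp (-b * x ^ 2))]
    congr 1
    ext x
    rw [(even_two_mul n).pow_abs, ← sq_abs, sq_abs]
  rw [habs]
  have hsub := integral_comp_rpow_Ioi_of_pos
    (g := fun t : ℝ => t ^ ((n : ℝ) + 1 / 2 - 1) * Real.exp (-(b * t))) zero_lt_two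
  have hval := Real.integral_rpow_mul_exp_neg_mul_Ioi
    (a := (n : ℝ) + 1 / 2) (r := b) (by positivity) hb
  rw [hval] at hsub
  have heq : ∀ x ∈ Ioi (0:ℝ),
      ((2:ℝ) * x ^ ((2:ℝ) - 1)) • ((x ^ (2:ℝ)) ^ ((n : ℝ) + 1 / 2 - 1)
        * Real.exp (-(b * x ^ (2:ℝ))))
      = 2 * (x ^ (2 * n) * Real.exp (-b * x ^ 2)) := by
    intro x hx
    have hx0 : 0 < x := hx
    rw [smul_eq_mul, ← Real.rpow_natCast x (2 * n), ← Real.rpow_two,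
      ← Real.rpow_mul hx0.le]
    rw [show ((2:ℝ) - 1) = 1 by norm_num, Real.rpow_one]
    rw [show (-(b * x ^ (2:ℝ))) = -b * x ^ 2 by rw [Real.rpow_two]; ring]
    rw [show (2 : ℝ) * ((n : ℝ) + 1 / 2 - 1) = 2 * n - 1 by ring]
    rw [show ((2 * n : ℕ) : ℝ) = 2 * n by push_cast; ring]
    rw [show (2 * (n:ℝ) - 1) = 2 * n + (-1) by ring, Real.rpow_add hx0, Real.rpow_neg_one]
    field_simp
    simp [Real.rpow_two, mul_comm]
  rw [setIntegral_congr_fun measurableSet_Ioi heq] at hsub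
  rw [integral_const_mul] at hsub
  have h2 : ∫ x in Ioi (0:ℝ), x ^ (2 * n) * Real.exp (-b * x ^ 2)
      = (1 / 2) * ((1 / b) ^ ((n : ℝ) + 1 / 2) * Real.Gamma ((n : ℝ) + 1 / 2)) := by
    rw [← hsub]; ring
  have hbr : 0 < b ^ ((n : ℝ) + 1 / 2) := Real.rpow_pos_of_pos hb _
  rw [h2, one_div b, Real.inv_rpow hb.le]
  field_simp

lemma gauss0 {b : ℝ} (hb : 0 < b) :
    ∫ x : ℝ, Real.exp (-b * x ^ 2) = Real.sqrt π / b ^ ((1:ℝ) / 2) := by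
  have := gauss_moment hb 0
  simp only [Nat.cast_zero, mul_zero, pow_zero, one_mul, zero_add] at this
  rw [this, Real.Gamma_one_half_eq]

lemma gauss1 {b : ℝ} (hb : 0 < b) :
    ∫ x : ℝ, x ^ 2 * Real.exp (-b * x ^ 2)
      = (Real.sqrt π / 2) / (b ^ ((1:ℝ) / 2) * b) := by
  have := gauss_moment hb 1
  simp only [Nat.cast_one, mul_one] at this
  rw [this]
  rw [show ((1:ℝ) + 1 / 2) = 1 / 2 + 1 by ring, Real.Gamma_add_one (by norm_num),
    Real.Gamma_one_half_eq, Real.rpow_add hb, Real.rpow_one]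
  ring

lemma gaussm1 {b : ℝ} (hb : 0 < b) (m : ℕ) :
    ∫ x : ℝ, x ^ (2 * m + 2) * Real.exp (-b * x ^ 2)
      = ((m : ℝ) + 1 / 2) * Real.Gamma ((m : ℝ) + 1 / 2)
        / (b ^ ((m : ℝ) + 1 / 2) * b) := by
  have := gauss_moment hb (m + 1)
  rw [show 2 * (m + 1) = 2 * m + 2 by ring] at this
  rw [this]
  rw [show ((m + 1 : ℕ) : ℝ) + 1 / 2 = ((m : ℝ) + 1 / 2) + 1 by push_cast; ring,
    Real.Gamma_add_one (by positivity), Real.rpow_add hb, Real.rpow_one]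

/-- potential-energy identity `∫ V_γ |ψ_m|² = γ₁·m/2 + (γ₁+γ₂+γ₃)/4`
for the anisotropic 3D vortex trial functions. -/
theorem anisotropic_vortex_potential_energy
    (γ₁ γ₂ γ₃ : ℝ) (h₁ : 0 < γ₁) (h₂ : 0 < γ₂) (h₃ : 0 < γ₃) (m : ℕ) :
    (∫ x : EuclideanSpace ℝ (Fin 3),
        (1 / 2) * (γ₁ ^ 2 * (x 0) ^ 2 + γ₂ ^ 2 * (x 1) ^ 2 + γ₃ ^ 2 * (x 2) ^ 2) *
          ((Real.sqrt (γ₂ * γ₃) / Real.pi * γ₁ ^ ((m : ℝ) + 1 / 2) /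
              Real.Gamma ((m : ℝ) + 1 / 2)) *
            (x 0) ^ (2 * m) *
            Real.exp (-(γ₁ * (x 0) ^ 2 + γ₂ * (x 1) ^ 2 + γ₃ * (x 2) ^ 2)))) =
      γ₁ * m / 2 + (γ₁ + γ₂ + γ₃) / 4 := by

  set C : ℝ := Real.sqrt (γ₂ * γ₃) / Real.pi * γ₁ ^ ((m : ℝ) + 1 / 2) /
      Real.Gamma ((m : ℝ) + 1 / 2) with hC
  have hmeq := (EuclideanSpace.volume_preserving_symm_measurableEquiv_toLp (Fin 3)).symm
  rw [← hmeq.integral_comp']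
  have hcoord : ∀ (y : Fin 3 → ℝ) (i : Fin 3),
      ((MeasurableEquiv.toLp 2 (Fin 3 → ℝ)).symm.symm y) i = y i := fun _ _ => rfl
  simp only [hcoord]
  set f : Fin 3 → ℝ → ℝ :=
    ![fun t => t ^ (2 * m + 2) * Real.exp (-γ₁ * t ^ 2),
      fun t => Real.exp (-γ₂ * t ^ 2),
      fun t => Real.exp (-γ₃ * t ^ 2)] with hf
  set g : Fin 3 → ℝ → ℝ :=
    ![fun t => t ^ (2 * m) * Real.exp (-γ₁ * t ^ 2),
      fun t => t ^ 2 * Real.exp (-γ₂ * t ^ 2),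
      fun t => Real.exp (-γ₃ * t ^ 2)] with hg
  set h : Fin 3 → ℝ → ℝ :=
    ![fun t => t ^ (2 * m) * Real.exp (-γ₁ * t ^ 2),
      fun t => Real.exp (-γ₂ * t ^ 2),
      fun t => t ^ 2 * Real.exp (-γ₃ * t ^ 2)] with hh
  have key : (fun y : Fin 3 → ℝ =>
      (1 / 2) * (γ₁ ^ 2 * (y 0) ^ 2 + γ₂ ^ 2 * (y 1) ^ 2 + γ₃ ^ 2 * (y 2) ^ 2) *
        (C * (y 0) ^ (2 * m) *
          Real.exp (-(γ₁ * (y 0) ^ 2 + γ₂ * (y 1) ^ 2 + γ₃ * (y 2) ^ 2))))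
      = fun y : Fin 3 → ℝ =>
        (1 / 2 * γ₁ ^ 2 * C) * ∏ i, f i (y i)
        + ((1 / 2 * γ₂ ^ 2 * C) * ∏ i, g i (y i)
        + (1 / 2 * γ₃ ^ 2 * C) * ∏ i, h i (y i)) := by
    funext y
    have hexp : -(γ₁ * (y 0) ^ 2 + γ₂ * (y 1) ^ 2 + γ₃ * (y 2) ^ 2)
        = (-γ₁ * (y 0) ^ 2) + ((-γ₂ * (y 1) ^ 2) + (-γ₃ * (y 2) ^ 2)) := by ring
    rw [hexp, Real.exp_add, Real.exp_add, Fin.prod_univ_three, Fin.prod_univ_three,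
      Fin.prod_univ_three]
    simp only [hf, hg, hh, Matrix.cons_val_zero, Matrix.cons_val_one, Matrix.head_cons,
      Matrix.cons_val_two, Matrix.tail_cons]
    ring
  rw [key]
  have hfI : ∀ i, Integrable (f i) := by
    intro i
    fin_cases i
    · exact integrable_pow_mul_exp_neg_mul_sq' h₁ (2 * m + 2)
    · exact integrable_exp_neg_mul_sq h₂
    · exact integrable_exp_neg_mul_sq h₃
  have hgI : ∀ i, Integrable (g i) := by
    intro i
    fin_cases i
    · exact integrable_pow_mul_exp_neg_mul_sq' h₁ (2 * m)
    · exact integrable_pow_mul_exp_neg_mul_sq' h₂ 2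
    · exact integrable_exp_neg_mul_sq h₃
  have hhI : ∀ i, Integrable (h i) := by
    intro i
    fin_cases i
    · exact integrable_pow_mul_exp_neg_mul_sq' h₁ (2 * m)
    · exact integrable_exp_neg_mul_sq h₂
    · exact integrable_pow_mul_exp_neg_mul_sq' h₃ 2
  have Hf : Integrable (fun y : Fin 3 → ℝ => ∏ i, f i (y i)) := .fintype_prod hfI
  have Hg : Integrable (fun y : Fin 3 → ℝ => ∏ i, g i (y i)) := .fintype_prod hgI
  have Hh : Integrable (fun y : Fin 3 → ℝ => ∏ i, h i (y i)) := .fintype_prod hhI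
  rw [integral_add
      (f := fun y : Fin 3 → ℝ => 1 / 2 * γ₁ ^ 2 * C * ∏ i, f i (y i))
      (g := fun y : Fin 3 → ℝ => 1 / 2 * γ₂ ^ 2 * C * ∏ i, g i (y i)
        + 1 / 2 * γ₃ ^ 2 * C * ∏ i, h i (y i))
      (Hf.const_mul _) ((Hg.const_mul _).add (Hh.const_mul _)),
    integral_add
      (f := fun y : Fin 3 → ℝ => 1 / 2 * γ₂ ^ 2 * C * ∏ i, g i (y i))
      (g := fun y : Fin 3 → ℝ => 1 / 2 * γ₃ ^ 2 * C * ∏ i, h i (y i))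
      (Hg.const_mul _) (Hh.const_mul _),
    integral_const_mul, integral_const_mul, integral_const_mul,
    integral_fintype_prod_volume_eq_prod f, integral_fintype_prod_volume_eq_prod g,
    integral_fintype_prod_volume_eq_prod h,
    Fin.prod_univ_three, Fin.prod_univ_three, Fin.prod_univ_three]
  simp only [hf, hg, hh, Matrix.cons_val_zero, Matrix.cons_val_one, Matrix.head_cons,
    Matrix.cons_val_two, Matrix.tail_cons]
  rw [gaussm1 h₁ m, gauss0 h₂, gauss0 h₃, gauss_moment h₁ m, gauss1 h₂, gauss1 h₃]
  -- algebra
  have hπ : Real.sqrt π * Real.sqrt π = π := Real.mul_self_sqrt Real.pi_pos.le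
  have hs23 : Real.sqrt (γ₂ * γ₃) = Real.sqrt γ₂ * Real.sqrt γ₃ := Real.sqrt_mul h₂.le _
  have hs2 : Real.sqrt γ₂ = γ₂ ^ ((1:ℝ)/2) := Real.sqrt_eq_rpow _
  have hs3 : Real.sqrt γ₃ = γ₃ ^ ((1:ℝ)/2) := Real.sqrt_eq_rpow _
  have hG : 0 < Real.Gamma ((m : ℝ) + 1 / 2) := Real.Gamma_pos_of_pos (by positivity)
  have hp1 : 0 < γ₁ ^ ((m:ℝ) + 1/2) := Real.rpow_pos_of_pos h₁ _
  have hp2 : 0 < γ₂ ^ ((1:ℝ)/2) := Real.rpow_pos_of_pos h₂ _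
  have hp3 : 0 < γ₃ ^ ((1:ℝ)/2) := Real.rpow_pos_of_pos h₃ _
  have hsπ : 0 < Real.sqrt π := Real.sqrt_pos.mpr Real.pi_pos
  rw [hC, hs23, hs2, hs3]
  set sπ := Real.sqrt π with hsπdef
  rw [show π = sπ * sπ from hπ.symm]
  field_simp
  ring
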